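/- Let μ_c, μ_t ∈ ℝ^m and let Σ_c, Σ_t be symmetric positive definite m×m real matrices such that Σ_c − Σ_t is positive definite. Define the Gaussian densities p_c(x) = (2π)^{-m/2} det(Σ_c)^{-1/2} exp(−(1/2)(x−μ_c)ᵀ Σ_c^{-1} (x−μ_c)) and p_t(x) = (2π)^{-m/2} det(Σ_t)^{-1/2} exp(−(1/2)(x−μ_t)ᵀ Σ_t^{-1} (x−μ_t)). Then p_c(x)/p_t(x) → ∞ as ‖x‖ → ∞; in particular, the set {x : p_c(x) < p_t(x)} is bounded. -/

import Mathlib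

open MeasureTheory Filter Matrix

private lemma posDef_conj_aux {n : Type*} [Fintype n] [DecidableEq n]
    {M : Matrix n n ℝ} (hM : M.PosDef) {C : Matrix n n ℝ} (hC : IsUnit C.det) :
    (Cᴴ * M * C).PosDef := by
  refine PosDef.of_dotProduct_mulVec_pos (isHermitian_conjTranspose_mul_mul C hM.1) fun x hx => ?_
  have hinj : Function.Injective C.mulVec :=
    mulVec_injective_iff_isUnit.mpr ((Matrix.isUnit_iff_isUnit_det C).mpr hC)
  have hx' : C *ᵥ x ≠ 0 := fun h => hx (hinj (by simpa using h))
  simpa only [star_mulVec, dotProduct_mulVec, vecMul_vecMul] using hM.dotProduct_mulVec_pos hx'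

private lemma inv_sub_inv_posDef {m : ℕ} {Sc St : Matrix (Fin m) (Fin m) ℝ}
    (hSc : Sc.PosDef) (hSt : St.PosDef) (hdiff : (Sc - St).PosDef) :
    (St⁻¹ - Sc⁻¹).PosDef := by
  have hScdet : IsUnit Sc.det := isUnit_iff_ne_zero.mpr hSc.det_pos.ne'
  have hStdet : IsUnit St.det := isUnit_iff_ne_zero.mpr hSt.det_pos.ne'
  have hDdet : IsUnit (Sc - St).det := isUnit_iff_ne_zero.mpr hdiff.det_pos.ne'
  have h1 : ∀ X : Matrix (Fin m) (Fin m) ℝ, Sc * (Sc⁻¹ * X) = X := fun X => by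
    rw [← mul_assoc, mul_nonsing_inv _ hScdet, one_mul]
  have h2 : ∀ X : Matrix (Fin m) (Fin m) ℝ, Sc⁻¹ * (Sc * X) = X := fun X => by
    rw [← mul_assoc, nonsing_inv_mul _ hScdet, one_mul]
  have h3 : ∀ X : Matrix (Fin m) (Fin m) ℝ, St * (St⁻¹ * X) = X := fun X => by
    rw [← mul_assoc, mul_nonsing_inv _ hStdet, one_mul]
  have h4 : ∀ X : Matrix (Fin m) (Fin m) ℝ, St⁻¹ * (St * X) = X := fun X => by
    rw [← mul_assoc, nonsing_inv_mul _ hStdet, one_mul]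
  have key : St⁻¹ - Sc⁻¹ =
      (Sc⁻¹)ᴴ * ((Sc - St) + (Sc - St)ᴴ * St⁻¹ * (Sc - St)) * Sc⁻¹ := by
    rw [hdiff.1, hSc.inv.1]
    simp only [sub_mul, mul_sub, add_mul, mul_add, mul_assoc, h1, h2, h3, h4,
      mul_nonsing_inv _ hScdet, nonsing_inv_mul _ hScdet,
      mul_nonsing_inv _ hStdet, nonsing_inv_mul _ hStdet, mul_one, one_mul]
    abel
  rw [key]
  exact posDef_conj_aux (hdiff.add (posDef_conj_aux hSt.inv hDdet))
    (isUnit_iff_ne_zero.mpr hSc.inv.det_pos.ne')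

private lemma dot_abs_le {m : ℕ} (w x : Fin m → ℝ) : |w ⬝ᵥ x| ≤ (∑ i, |w i|) * ‖x‖ := by
  calc |∑ i, w i * x i| ≤ ∑ i, |w i * x i| := Finset.abs_sum_le_sum_abs _ _
    _ ≤ ∑ i, |w i| * ‖x‖ := Finset.sum_le_sum fun i _ => by
        rw [abs_mul]
        exact mul_le_mul_of_nonneg_left
          (by simpa [Real.norm_eq_abs] using norm_le_pi_norm x i) (abs_nonneg _)
    _ = _ := by rw [← Finset.sum_mul]

private lemma posDef_coercive {m : ℕ} {M : Matrix (Fin m) (Fin m) ℝ} (hM : M.PosDef) :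
    ∃ ε > 0, ∀ v : Fin m → ℝ, ε * ‖v‖ ^ 2 ≤ v ⬝ᵥ M *ᵥ v := by
  rcases Nat.eq_zero_or_pos m with hm | hm
  · refine ⟨1, one_pos, fun v => ?_⟩
    subst hm
    have hv : v = 0 := Subsingleton.elim _ _
    rw [hv, norm_zero]
    simp
  · have hne : Nonempty (Fin m) := ⟨⟨0, hm⟩⟩
    have hcont : Continuous fun v : Fin m → ℝ => v ⬝ᵥ M *ᵥ v :=
      continuous_id.dotProduct (continuous_const.matrix_mulVec continuous_id)
    have hsne : (Metric.sphere (0 : Fin m → ℝ) 1).Nonempty :=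
      NormedSpace.sphere_nonempty.mpr zero_le_one
    obtain ⟨u, hu, hmin⟩ := (isCompact_sphere (0 : Fin m → ℝ) 1).exists_isMinOn hsne
      hcont.continuousOn
    have hu1 : ‖u‖ = 1 := by simpa using hu
    have hu0 : u ≠ 0 := fun h => by simp [h] at hu1
    have hε : 0 < u ⬝ᵥ M *ᵥ u := by simpa using hM.dotProduct_mulVec_pos hu0
    refine ⟨_, hε, fun v => ?_⟩
    rcases eq_or_ne v 0 with rfl | hv
    · simp
    · have hnv : 0 < ‖v‖ := norm_pos_iff.mpr hv
      set w := ‖v‖⁻¹ • v with hw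
      have hws : w ∈ Metric.sphere (0 : Fin m → ℝ) 1 := by
        simp [hw, norm_smul, abs_of_pos (inv_pos.mpr hnv), inv_mul_cancel₀ hnv.ne']
      have hvw : v = ‖v‖ • w := by
        rw [hw, smul_smul, mul_inv_cancel₀ hnv.ne', one_smul]
      have key : v ⬝ᵥ M *ᵥ v = ‖v‖ ^ 2 * (w ⬝ᵥ M *ᵥ w) := by
        conv_lhs => rw [hvw]
        simp only [smul_dotProduct, dotProduct_smul, mulVec_smul, smul_eq_mul]
        ring
      have hle : u ⬝ᵥ M *ᵥ u ≤ w ⬝ᵥ M *ᵥ w := hmin hws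
      rw [key]
      have := mul_le_mul_of_nonneg_right hle (sq_nonneg ‖v‖)
      linarith

/-- If `Σ_c − Σ_t` is positive definite, then for the corresponding Gaussian
densities (possibly with different means) we have `p_c / p_t → ∞` at infinity;
in particular `{x | p_c x < p_t x}` is bounded. -/
theorem gaussian_posdef_ratio_tendsto_atTop
    (m : ℕ) (μc μt : Fin m → ℝ) (Sc St : Matrix (Fin m) (Fin m) ℝ)
    (hSc : Sc.PosDef) (hSt : St.PosDef) (hdiff : (Sc - St).PosDef)
    (pc pt : (Fin m → ℝ) → ℝ)
    (hpc : ∀ x, pc x = (2 * Real.pi) ^ (-(m : ℝ) / 2) * Sc.det ^ (-(1 : ℝ) / 2) *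
      Real.exp (-(1 / 2) * ((x - μc) ⬝ᵥ Sc⁻¹.mulVec (x - μc))))
    (hpt : ∀ x, pt x = (2 * Real.pi) ^ (-(m : ℝ) / 2) * St.det ^ (-(1 : ℝ) / 2) *
      Real.exp (-(1 / 2) * ((x - μt) ⬝ᵥ St⁻¹.mulVec (x - μt)))) :
    Tendsto (fun x => pc x / pt x) (comap (fun x => ‖x‖) atTop) atTop ∧
    Bornology.IsBounded {x | pc x < pt x} := by
  set g : (Fin m → ℝ) → ℝ := fun x =>
    (x - μt) ⬝ᵥ St⁻¹ *ᵥ (x - μt) - (x - μc) ⬝ᵥ Sc⁻¹ *ᵥ (x - μc) with hg_def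
  have hA : (0 : ℝ) < (2 * Real.pi) ^ (-(m : ℝ) / 2) :=
    Real.rpow_pos_of_pos (by positivity) _
  have hBc : (0 : ℝ) < Sc.det ^ (-(1 : ℝ) / 2) := Real.rpow_pos_of_pos hSc.det_pos _
  have hBt : (0 : ℝ) < St.det ^ (-(1 : ℝ) / 2) := Real.rpow_pos_of_pos hSt.det_pos _
  have hptpos : ∀ x, 0 < pt x := fun x => by
    rw [hpt]
    exact mul_pos (mul_pos hA hBt) (Real.exp_pos _)
  have hratio : ∀ x, pc x / pt x =
      (Sc.det ^ (-(1 : ℝ) / 2) / St.det ^ (-(1 : ℝ) / 2)) * Real.exp (g x / 2) := by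
    intro x
    rw [hpc, hpt, mul_assoc, mul_assoc, mul_div_mul_left _ _ hA.ne',
      mul_div_mul_comm, ← Real.exp_sub]
    congr 1
    simp only [hg_def]
    ring_nf
  -- coercivity and linear bounds
  obtain ⟨ε, hε, hcoer⟩ := posDef_coercive (inv_sub_inv_posDef hSc hSt hdiff)
  set c₀ : ℝ := μt ⬝ᵥ St⁻¹ *ᵥ μt - μc ⬝ᵥ Sc⁻¹ *ᵥ μc with hc₀
  obtain ⟨K, hK⟩ : ∃ K : ℝ, ∀ x, ε * ‖x‖ ^ 2 - K * ‖x‖ + c₀ ≤ g x := by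
    refine ⟨(∑ i, |(St⁻¹ *ᵥ μt) i|) + (∑ i, |(μt ᵥ* St⁻¹) i|) +
      (∑ i, |(Sc⁻¹ *ᵥ μc) i|) + (∑ i, |(μc ᵥ* Sc⁻¹) i|), fun x => ?_⟩
    have hgx : g x = x ⬝ᵥ (St⁻¹ - Sc⁻¹) *ᵥ x
        - (St⁻¹ *ᵥ μt) ⬝ᵥ x - (μt ᵥ* St⁻¹) ⬝ᵥ x
        + (Sc⁻¹ *ᵥ μc) ⬝ᵥ x + (μc ᵥ* Sc⁻¹) ⬝ᵥ x + c₀ := by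
      simp only [hg_def, hc₀, sub_dotProduct, dotProduct_sub, mulVec_sub, sub_mulVec]
      rw [dotProduct_comm (St⁻¹ *ᵥ μt) x, dotProduct_comm (Sc⁻¹ *ᵥ μc) x,
        dotProduct_mulVec μt, dotProduct_mulVec μc]
      ring
    have h1 := hcoer x
    have b1 := abs_le.mp (dot_abs_le (St⁻¹ *ᵥ μt) x)
    have b2 := abs_le.mp (dot_abs_le (μt ᵥ* St⁻¹) x)
    have b3 := abs_le.mp (dot_abs_le (Sc⁻¹ *ᵥ μc) x)
    have b4 := abs_le.mp (dot_abs_le (μc ᵥ* Sc⁻¹) x)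
    rw [hgx]
    nlinarith [b1.2, b2.2, b3.1, b4.1, h1]
  have hpoly : Tendsto (fun r : ℝ => ε * r ^ 2 - K * r + c₀) atTop atTop := by
    have h1 : Tendsto (fun r : ℝ => ε * r + -K) atTop atTop :=
      tendsto_atTop_add_const_right atTop (-K) (tendsto_id.const_mul_atTop hε)
    have h2 : Tendsto (fun r : ℝ => r * (ε * r + -K)) atTop atTop :=
      tendsto_id.atTop_mul_atTop₀ h1
    exact (tendsto_atTop_add_const_right atTop c₀ h2).congr fun r => by ring
  have hgtend : Tendsto g (comap (fun x : Fin m → ℝ => ‖x‖) atTop) atTop :=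
    tendsto_atTop_mono hK (hpoly.comp tendsto_comap)
  have htend : Tendsto (fun x => pc x / pt x)
      (comap (fun x : Fin m → ℝ => ‖x‖) atTop) atTop := by
    have h1 := Real.tendsto_exp_atTop.comp (hgtend.atTop_div_const two_pos)
    have h2 := h1.const_mul_atTop (div_pos hBc hBt)
    exact h2.congr fun x => (hratio x).symm
  refine ⟨htend, ?_⟩
  have hev : ∀ᶠ x in comap (fun x : Fin m → ℝ => ‖x‖) atTop, 1 ≤ pc x / pt x :=
    htend.eventually_ge_atTop 1
  rw [comap_norm_atTop] at hev
  have hb : Bornology.IsBounded {x : Fin m → ℝ | pc x / pt x < 1} := by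
    rw [Bornology.isBounded_def]
    exact Filter.mem_of_superset hev fun x hx => by
      simp only [Set.mem_compl_iff, Set.mem_setOf_eq, not_lt]
      exact hx
  exact hb.subset fun x hx => (div_lt_one (hptpos x)).mpr hx
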